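/- arXiv:math/9804093 — 4 statements merged into one kernel-verified Lean document; each statement's English description precedes it below -/
import Mathlib

section
/- Let X be a complex Banach space and K ⊆ X. Then K is compact if and only if K is closed and there exists a sequence (xₙ) in X with xₙ → 0 such that K is contained in the closure of the convex hull of the set {xₙ : n ∈ ℕ}. -/
open Filter

private lemma sum_half_pow' (m : ℕ) :
    ∑ n ∈ Finset.range m, ((2:ℝ)⁻¹)^(n+1) = 1 - ((2:ℝ)⁻¹)^m := by
  induction m with
  | zero => simp
  | succ m ih => rw [Finset.sum_range_succ, ih, pow_succ]; ring

private lemma pow_arith' (n : ℕ) :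
    (2:ℝ)^(n+2) * (2 * ((4:ℝ)⁻¹)^(n+1)) = 2 * ((2:ℝ)⁻¹)^n := by
  have h1 : ((4:ℝ)⁻¹)^(n+1) = ((2:ℝ)⁻¹)^(n+2) * ((2:ℝ)⁻¹)^n := by
    rw [← pow_add, show n+2+n = 2*(n+1) by ring, pow_mul]
    norm_num
  have h2 : (2:ℝ)^(n+2) * ((2:ℝ)⁻¹)^(n+2) = 1 := by
    rw [← mul_pow]; norm_num
  rw [h1]
  linear_combination (2 * ((2:ℝ)⁻¹)^n) * h2

/-- In a complex Banach space, a set `K` is compact iff it is closed and contained in the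
closed convex hull of the set of terms of some null sequence. -/
theorem isCompact_iff_subset_closure_convexHull_of_null_seq
    (X : Type*) [NormedAddCommGroup X] [NormedSpace ℂ X] [CompleteSpace X] (K : Set X) :
    IsCompact K ↔
      IsClosed K ∧ ∃ x : ℕ → X, Tendsto x atTop (nhds 0) ∧
        K ⊆ closure (convexHull ℝ (Set.range x)) := by
  constructor
  · intro hK
    refine ⟨hK.isClosed, ?_⟩
    have htb := Metric.totallyBounded_iff.mp hK.totallyBounded
    have hT : ∀ n : ℕ, ∃ t : Set X, t.Finite ∧ K ⊆ ⋃ y ∈ t, Metric.ball y (((4:ℝ)⁻¹)^(n+1)) :=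
      fun n => htb _ (by positivity)
    choose T hTfin hTcov using hT
    -- choice of nearest net point
    have hy : ∀ (n : ℕ) (z : X), ∃ c, z ∈ K → (c ∈ T n ∧ dist z c < ((4:ℝ)⁻¹)^(n+1)) := by
      intro n z
      by_cases hz : z ∈ K
      · have := hTcov n hz
        simp only [Set.mem_iUnion, Metric.mem_ball] at this
        obtain ⟨c, hc1, hc2⟩ := this
        exact ⟨c, fun _ => ⟨hc1, hc2⟩⟩
      · exact ⟨0, fun h => absurd h hz⟩
    choose y hy1 using hy
    -- the telescoping pieces
    set v : ℕ → X → X := fun n z =>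
      Nat.casesOn n ((2:ℝ) • y 0 z) (fun m => (2:ℝ)^(m+2) • (y (m+1) z - y m z)) with hv
    have hv0 : ∀ z : X, v 0 z = (2:ℝ) • y 0 z := fun _ => rfl
    have hvs : ∀ (m : ℕ) (z : X), v (m+1) z = (2:ℝ)^(m+2) • (y (m+1) z - y m z) := fun _ _ => rfl
    -- the countable sets of possible pieces
    set W : ℕ → Set X := fun n =>
      Nat.casesOn n ((fun c => (2:ℝ) • c) '' T 0)
        (fun m => (fun p : X × X => (2:ℝ)^(m+2) • (p.1 - p.2)) ''
          ((T (m+1) ×ˢ T m) ∩ {p | ‖p.1 - p.2‖ ≤ 2 * ((4:ℝ)⁻¹)^(m+1)})) with hW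
    have hWfin : ∀ n, (W n).Finite := by
      intro n
      cases n with
      | zero => exact (hTfin 0).image _
      | succ m => exact (Set.Finite.subset ((hTfin (m+1)).prod (hTfin m))
          Set.inter_subset_left).image _
    have hvW : ∀ n (z : X), z ∈ K → v n z ∈ W n := by
      intro n z hz
      cases n with
      | zero => exact ⟨y 0 z, (hy1 0 z hz).1, rfl⟩
      | succ m =>
        refine ⟨(y (m+1) z, y m z), ⟨⟨(hy1 (m+1) z hz).1, (hy1 m z hz).1⟩, ?_⟩, rfl⟩
        have h1 : dist (y (m+1) z) (y m z) ≤ dist z (y (m+1) z) + dist z (y m z) :=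
          dist_triangle_left _ _ _
        have h2 := (hy1 (m+1) z hz).2
        have h3 := (hy1 m z hz).2
        have h4 : ((4:ℝ)⁻¹)^(m+2) ≤ ((4:ℝ)⁻¹)^(m+1) :=
          pow_le_pow_of_le_one (by norm_num) (by norm_num) (by omega)
        have h5 : ‖y (m+1) z - y m z‖ = dist (y (m+1) z) (y m z) := (dist_eq_norm _ _).symm
        rw [Set.mem_setOf_eq, h5]
        linarith
    have hWnorm : ∀ m (w : X), w ∈ W (m+1) → ‖w‖ ≤ 2 * ((2:ℝ)⁻¹)^m := by
      rintro m w ⟨⟨a, b⟩, ⟨-, hab⟩, rfl⟩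
      rw [norm_smul]
      simp only [Set.mem_setOf_eq] at hab
      calc ‖(2:ℝ)^(m+2)‖ * ‖a - b‖ ≤ (2:ℝ)^(m+2) * (2 * ((4:ℝ)⁻¹)^(m+1)) := by
            rw [Real.norm_eq_abs, abs_of_pos (by positivity)]
            exact mul_le_mul_of_nonneg_left hab (by positivity)
        _ = 2 * ((2:ℝ)⁻¹)^m := pow_arith' m
    -- enumerate all pieces as lists
    have hlist : ∀ n : ℕ, ∃ L : List X, ∀ w : X, w ∈ L ↔ w ∈ W n := by
      intro n
      exact ⟨(hWfin n).toFinset.toList, fun w => by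
        rw [Finset.mem_toList, Set.Finite.mem_toFinset]⟩
    choose l hlmem using hlist
    -- the null sequence
    set x : ℕ → X := fun p => (l p.unpair.1).getD p.unpair.2 0 with hx
    have hmem : ∀ n, W n ⊆ Set.range x := by
      intro n w hw
      obtain ⟨i, hi, hget⟩ := List.mem_iff_getElem.mp ((hlmem n w).mpr hw)
      refine ⟨Nat.pair n i, ?_⟩
      simp only [hx, Nat.unpair_pair]
      rw [List.getD_eq_getElem _ _ hi, hget]
    have hzero : (0:X) ∈ Set.range x := by
      refine ⟨Nat.pair 0 (l 0).length, ?_⟩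
      simp only [hx, Nat.unpair_pair]
      exact List.getD_eq_default _ _ le_rfl
    -- x is either 0 or in W of the first unpair coordinate
    have hxW : ∀ p : ℕ, x p = 0 ∨ x p ∈ W p.unpair.1 := by
      intro p
      by_cases hb : p.unpair.2 < (l p.unpair.1).length
      · right
        have hg : x p = (l p.unpair.1)[p.unpair.2] := List.getD_eq_getElem _ _ hb
        rw [hg]
        exact (hlmem _ _).mp (List.getElem_mem hb)
      · left
        exact List.getD_eq_default _ _ (le_of_not_gt hb)
    -- zero test via list length
    have hlen0 : ∀ p : ℕ, (l p.unpair.1).length ≤ p.unpair.2 → x p = 0 :=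
      fun p h => List.getD_eq_default _ _ h
    -- tendsto
    have hxt : Tendsto x atTop (nhds 0) := by
      rw [← Nat.cofinite_eq_atTop, Metric.tendsto_nhds]
      intro ε hε
      rw [Filter.eventually_cofinite]
      obtain ⟨n₀, hn₀⟩ := exists_pow_lt_of_lt_one (show (0:ℝ) < ε/2 by positivity)
        (show ((2:ℝ)⁻¹) < 1 by norm_num)
      set M : ℕ := (Finset.range (n₀+2)).sup (fun a => (l a).length) with hM
      have key : ∀ p : ℕ, ¬ dist (x p) 0 < ε → p.unpair.1 ≤ n₀ ∧ p.unpair.2 < M := by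
        intro p hp
        have hne : x p ≠ 0 := by
          intro h; apply hp; rw [h]; simpa using hε
        have hxp : x p ∈ W p.unpair.1 := (hxW p).resolve_left hne
        have ha : p.unpair.1 ≤ n₀ := by
          by_contra hcon
          push_neg at hcon
          obtain ⟨m, hm⟩ : ∃ m, p.unpair.1 = m + 1 := ⟨p.unpair.1 - 1, by omega⟩
          have hnorm : ‖x p‖ ≤ 2 * ((2:ℝ)⁻¹)^m := hWnorm m _ (hm ▸ hxp)
          have hmle : ((2:ℝ)⁻¹)^m ≤ ((2:ℝ)⁻¹)^n₀ :=
            pow_le_pow_of_le_one (by norm_num) (by norm_num) (by omega)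
          apply hp
          rw [dist_zero_right]
          linarith
        refine ⟨ha, ?_⟩
        have hlen : p.unpair.2 < (l p.unpair.1).length := by
          by_contra hcon
          exact hne (hlen0 p (le_of_not_gt hcon))
        exact lt_of_lt_of_le hlen
          (Finset.le_sup (f := fun a => (l a).length) (Finset.mem_range.mpr (by omega)))
      apply Set.Finite.subset (Set.Finite.image (fun q : ℕ × ℕ => Nat.pair q.1 q.2)
        ((Set.finite_Iic n₀).prod (Set.finite_Iio M)))
      intro p hp
      obtain ⟨h1, h2⟩ := key p hp
      exact ⟨(p.unpair.1, p.unpair.2), ⟨h1, h2⟩, Nat.pair_unpair p⟩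
    refine ⟨x, hxt, ?_⟩
    -- main inclusion
    intro z hz
    -- telescoping sum identity
    have hsum : ∀ N : ℕ, ∑ n ∈ Finset.range (N+1), ((2:ℝ)⁻¹)^(n+1) • v n z = y N z := by
      intro N
      induction N with
      | zero =>
        rw [show (0:ℕ)+1 = 1 from rfl, Finset.sum_range_one, hv0, smul_smul]
        norm_num
      | succ N ih =>
        rw [Finset.sum_range_succ, ih, hvs, smul_smul, ← mul_pow]
        norm_num
    -- each y N z lies in the convex hull
    have hmemN : ∀ N : ℕ, y N z ∈ convexHull ℝ (Set.range x) := by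
      intro N
      set wgt : ℕ → ℝ := fun n => if n < N+1 then ((2:ℝ)⁻¹)^(n+1) else ((2:ℝ)⁻¹)^(N+1) with hwgt
      set pts : ℕ → X := fun n => if n < N+1 then v n z else 0 with hpts
      have hsw : ∑ n ∈ Finset.range (N+2), wgt n = 1 := by
        rw [Finset.sum_range_succ]
        have h1 : ∑ n ∈ Finset.range (N+1), wgt n
            = ∑ n ∈ Finset.range (N+1), ((2:ℝ)⁻¹)^(n+1) :=
          Finset.sum_congr rfl fun n hn => if_pos (Finset.mem_range.mp hn)
        rw [h1, sum_half_pow']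
        simp [hwgt]
      have hcm : (Finset.range (N+2)).centerMass wgt pts = y N z := by
        rw [Finset.centerMass_eq_of_sum_1 _ _ hsw]
        rw [Finset.sum_range_succ]
        have h1 : ∑ n ∈ Finset.range (N+1), wgt n • pts n
            = ∑ n ∈ Finset.range (N+1), ((2:ℝ)⁻¹)^(n+1) • v n z :=
          Finset.sum_congr rfl fun n hn => by
            rw [hwgt, hpts]; simp only [if_pos (Finset.mem_range.mp hn)]
        rw [h1, hsum]
        simp [hwgt, hpts]
      rw [← hcm]
      apply Finset.centerMass_mem_convexHull
      · intro i _
        simp only [hwgt]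
        split <;> positivity
      · rw [hsw]; norm_num
      · intro i _
        simp only [hpts]
        split
        · exact hmem _ (hvW i z hz)
        · exact hzero
    -- y N z → z
    have hyt : Tendsto (fun N => y N z) atTop (nhds z) := by
      rw [tendsto_iff_dist_tendsto_zero]
      apply squeeze_zero (fun N => dist_nonneg) (fun N => (dist_comm (y N z) z ▸ (hy1 N z hz).2.le))
      have h6 : Tendsto (fun N : ℕ => ((4:ℝ)⁻¹)^N) atTop (nhds 0) :=
        tendsto_pow_atTop_nhds_zero_of_lt_one (by norm_num) (by norm_num)
      have h7 := h6.comp (tendsto_add_atTop_nat 1)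
      simpa [Function.comp_def] using h7
    exact mem_closure_of_tendsto hyt (Filter.Eventually.of_forall hmemN)
  · rintro ⟨hKc, x, hx, hsub⟩
    have h1 : IsCompact (insert 0 (Set.range x)) := hx.isCompact_insert_range
    have h2 : TotallyBounded (convexHull ℝ (insert 0 (Set.range x))) :=
      totallyBounded_convexHull.mpr h1.totallyBounded
    have h3 : IsCompact (closure (convexHull ℝ (insert 0 (Set.range x)))) :=
      TotallyBounded.isCompact_of_isClosed h2.closure isClosed_closure
    exact h3.of_isClosed_subset hKc
      (hsub.trans (closure_mono (convexHull_mono (Set.subset_insert _ _))))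
end

section
/- Let X be a complex Banach space and K ⊆ X. Then K is compact if and only if K is closed and there exists a sequence (xᵢ) in X with xᵢ → 0 such that K is contained in the closure of the set of all finite absolutely convex combinations { Σ_{i ∈ F} τᵢ xᵢ : F ⊆ ℕ finite, τᵢ ∈ ℂ, Σ_{i ∈ F} |τᵢ| ≤ 1 }. -/
open Filter Finset

lemma absconv_totallyBounded (X : Type*) [NormedAddCommGroup X] [NormedSpace ℂ X]
    (x : ℕ → X) (hx : Tendsto x atTop (nhds 0)) :
    TotallyBounded {v : X | ∃ (F : Finset ℕ) (τ : ℕ → ℂ),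
      (∑ i ∈ F, ‖τ i‖) ≤ 1 ∧ v = ∑ i ∈ F, τ i • x i} := by
  rw [Metric.totallyBounded_iff]
  intro ε hε
  obtain ⟨N, hN⟩ : ∃ N : ℕ, ∀ i ≥ N, ‖x i‖ ≤ ε / 4 := by
    obtain ⟨N, hN⟩ := eventually_atTop.mp
      (NormedAddCommGroup.tendsto_nhds_zero.mp hx (ε/4) (by linarith))
    exact ⟨N, fun i hi => (hN i hi).le⟩
  set φ : (Fin N → ℂ) → X := fun c => ∑ j : Fin N, c j • x j with hφ
  have hφc : Continuous φ := by
    apply continuous_finset_sum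
    intro j _
    exact (continuous_apply j).smul continuous_const
  set D : Set (Fin N → ℂ) := {c | ∑ j : Fin N, ‖c j‖ ≤ 1} with hD
  have hDc : IsCompact D := by
    apply Metric.isCompact_of_isClosed_isBounded
    · have hc : Continuous fun c : Fin N → ℂ => ∑ j : Fin N, ‖c j‖ := by
        apply continuous_finset_sum
        intro j _
        exact continuous_norm.comp (continuous_apply j)
      exact isClosed_le hc continuous_const
    · apply (Metric.isBounded_closedBall (x := (0 : Fin N → ℂ)) (r := 1)).subset
      intro c hc
      rw [Metric.mem_closedBall, dist_zero_right]
      rw [pi_norm_le_iff_of_nonneg zero_le_one]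
      intro j
      calc ‖c j‖ = ‖c j‖ := rfl
        _ ≤ ∑ i : Fin N, ‖c i‖ :=
            Finset.single_le_sum (fun i _ => norm_nonneg _) (Finset.mem_univ j)
        _ ≤ 1 := hc
  obtain ⟨t, htf, ht⟩ := Metric.totallyBounded_iff.mp
    (hDc.image hφc).totallyBounded (ε/2) (by linarith)
  refine ⟨t, htf, ?_⟩
  rintro v ⟨F, τ, hτ, rfl⟩
  set c : Fin N → ℂ := fun j => if (j : ℕ) ∈ F then τ j else 0 with hc
  have hcD : c ∈ D := by
    have : ∑ j : Fin N, ‖c j‖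
        = ∑ i ∈ Finset.range N, (if i ∈ F then ‖τ i‖ else 0) := by
      rw [← Fin.sum_univ_eq_sum_range (fun i => if i ∈ F then ‖τ i‖ else 0) N]
      refine Finset.sum_congr rfl fun j _ => ?_
      simp only [hc, apply_ite (norm : ℂ → ℝ), norm_zero]
    rw [hD, Set.mem_setOf_eq, this, Finset.sum_ite_mem]
    calc ∑ i ∈ Finset.range N ∩ F, ‖τ i‖
        ≤ ∑ i ∈ F, ‖τ i‖ :=
          Finset.sum_le_sum_of_subset_of_nonneg (Finset.inter_subset_right)
            (fun i _ _ => norm_nonneg _)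
      _ ≤ 1 := hτ
  have h1 : φ c = ∑ i ∈ F.filter (fun i => i < N), τ i • x i := by
    calc ∑ j : Fin N, c j • x ↑j
        = ∑ i ∈ Finset.range N, (if i ∈ F then τ i else 0) • x i :=
          Fin.sum_univ_eq_sum_range (fun i => (if i ∈ F then τ i else 0) • x i) N
      _ = ∑ i ∈ Finset.range N, (if i ∈ F then τ i • x i else 0) := by
          refine Finset.sum_congr rfl fun i _ => ?_
          split <;> simp
      _ = ∑ i ∈ Finset.range N ∩ F, τ i • x i := Finset.sum_ite_mem _ _ _
      _ = ∑ i ∈ F.filter (fun i => i < N), τ i • x i := by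
          congr 1
          ext i
          simp [Finset.mem_filter, Finset.mem_range, and_comm]
  have hsplit : ∑ i ∈ F, τ i • x i
      = φ c + ∑ i ∈ F.filter (fun i => ¬ i < N), τ i • x i := by
    rw [h1]
    exact (Finset.sum_filter_add_sum_filter_not F (fun i => i < N) _).symm
  have htail : ‖∑ i ∈ F.filter (fun i => ¬ i < N), τ i • x i‖ ≤ ε / 4 := by
    calc ‖∑ i ∈ F.filter (fun i => ¬ i < N), τ i • x i‖
        ≤ ∑ i ∈ F.filter (fun i => ¬ i < N), ‖τ i • x i‖ := norm_sum_le _ _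
      _ ≤ ∑ i ∈ F.filter (fun i => ¬ i < N), ‖τ i‖ * (ε / 4) := by
          refine Finset.sum_le_sum fun i hi => ?_
          rw [norm_smul]
          exact mul_le_mul_of_nonneg_left
            (hN i (Nat.le_of_not_lt (Finset.mem_filter.mp hi).2)) (norm_nonneg _)
      _ = (∑ i ∈ F.filter (fun i => ¬ i < N), ‖τ i‖) * (ε / 4) :=
          (Finset.sum_mul _ _ _).symm
      _ ≤ 1 * (ε / 4) := by
          refine mul_le_mul_of_nonneg_right ?_ (by linarith)
          exact le_trans (Finset.sum_le_sum_of_subset_of_nonneg (Finset.filter_subset _ _)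
            (fun _ _ _ => norm_nonneg _)) hτ
      _ ≤ ε / 4 := by linarith
  obtain ⟨y, hy, hball⟩ := Set.mem_iUnion₂.mp (ht ⟨c, hcD, rfl⟩)
  refine Set.mem_iUnion₂.mpr ⟨y, hy, ?_⟩
  rw [Metric.mem_ball]
  calc dist (∑ i ∈ F, τ i • x i) y
      ≤ dist (∑ i ∈ F, τ i • x i) (φ c) + dist (φ c) y := dist_triangle _ _ _
    _ < ε / 4 + ε / 2 := by
        refine add_lt_add_of_le_of_lt ?_ (Metric.mem_ball.mp hball)
        rw [dist_eq_norm, hsplit, add_sub_cancel_left]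
        exact htail
    _ < ε := by linarith

section Forward
variable {X : Type*} [NormedAddCommGroup X] [NormedSpace ℂ X]

open Classical in
/-- A finite `ε`-net for a compact set (junk value otherwise). -/
noncomputable def gNet (S : Set X) (ε : ℝ) : Finset X :=
  if h : IsCompact S ∧ 0 < ε then
    (Metric.totallyBounded_iff.mp h.1.totallyBounded ε h.2).choose_spec.1.toFinset
  else ∅

lemma gNet_spec {S : Set X} {ε : ℝ} (hS : IsCompact S) (hε : 0 < ε) {s : X} (hs : s ∈ S) :
    ∃ a ∈ gNet S ε, dist s a < ε := by
  rw [gNet]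
  rw [dif_pos ⟨hS, hε⟩]
  have hspec := (Metric.totallyBounded_iff.mp hS.totallyBounded ε hε).choose_spec
  obtain ⟨y, hy, hby⟩ := Set.mem_iUnion₂.mp (hspec.2 hs)
  exact ⟨y, hspec.1.mem_toFinset.mpr hy, Metric.mem_ball.mp hby⟩

/-- The recursively defined remainder sets. -/
noncomputable def gR (K : Set X) : ℕ → Set X
  | 0 => K
  | n + 1 => (⋃ a ∈ gNet (gR K n) ((4:ℝ)⁻¹ ^ (n+1)), (fun y => y - a) '' gR K n) ∩
      Metric.closedBall 0 ((4:ℝ)⁻¹ ^ (n+1))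

lemma gR_isCompact {K : Set X} (hK : IsCompact K) : ∀ n, IsCompact (gR K n) := by
  intro n
  induction n with
  | zero => exact hK
  | succ n ih =>
    refine IsCompact.inter_right ?_ Metric.isClosed_closedBall
    refine (gNet (gR K n) ((4:ℝ)⁻¹ ^ (n+1))).finite_toSet.isCompact_biUnion fun a _ => ?_
    exact ih.image (continuous_id.sub continuous_const)

lemma gR_subset_ball (K : Set X) (n : ℕ) :
    gR K (n+1) ⊆ Metric.closedBall 0 ((4:ℝ)⁻¹ ^ (n+1)) := Set.inter_subset_right

lemma gR_step {K : Set X} (hK : IsCompact K) (n : ℕ) {s : X} (hs : s ∈ gR K n) :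
    ∃ a ∈ gNet (gR K n) ((4:ℝ)⁻¹ ^ (n+1)), s - a ∈ gR K (n+1) := by
  have hε : (0:ℝ) < (4:ℝ)⁻¹ ^ (n+1) := by positivity
  obtain ⟨a, ha, hda⟩ := gNet_spec (gR_isCompact hK n) hε hs
  refine ⟨a, ha, ?_, ?_⟩
  · exact Set.mem_iUnion₂.mpr ⟨a, ha, ⟨s, hs, rfl⟩⟩
  · rw [Metric.mem_closedBall, dist_zero_right, ← dist_eq_norm]
    exact hda.le

/-- The filtered nets (only keeping small elements). -/
noncomputable def gA (K : Set X) (M : ℝ) (n : ℕ) : Finset X :=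
  (gNet (gR K n) ((4:ℝ)⁻¹ ^ (n+1))).filter
    (fun a => ‖a‖ ≤ (if n = 0 then M else (4:ℝ)⁻¹ ^ n) + (4:ℝ)⁻¹ ^ (n+1))

lemma gA_step {K : Set X} {M : ℝ} (hK : IsCompact K) (hM : ∀ k ∈ K, ‖k‖ ≤ M) (n : ℕ)
    {s : X} (hs : s ∈ gR K n) :
    ∃ a ∈ gA K M n, s - a ∈ gR K (n+1) := by
  obtain ⟨a, ha, hmem⟩ := gR_step hK n hs
  refine ⟨a, Finset.mem_filter.mpr ⟨ha, ?_⟩, hmem⟩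
  have h1 : ‖s - a‖ ≤ (4:ℝ)⁻¹ ^ (n+1) := by
    have := (gR_subset_ball K n) hmem
    rwa [Metric.mem_closedBall, dist_zero_right] at this
  have h2 : ‖s‖ ≤ (if n = 0 then M else (4:ℝ)⁻¹ ^ n) := by
    rcases n with _ | m
    · simpa using hM s hs
    · have := (gR_subset_ball K m) hs
      rw [Metric.mem_closedBall, dist_zero_right] at this
      simpa using this
  calc ‖a‖ = ‖s - (s - a)‖ := by rw [sub_sub_cancel]
    _ ≤ ‖s‖ + ‖s - a‖ := norm_sub_le _ _
    _ ≤ (if n = 0 then M else (4:ℝ)⁻¹ ^ n) + (4:ℝ)⁻¹ ^ (n+1) := add_le_add h2 h1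

lemma gA_norm_le {K : Set X} {M : ℝ} {n : ℕ} {a : X} (ha : a ∈ gA K M n) :
    ‖a‖ ≤ (if n = 0 then M else (4:ℝ)⁻¹ ^ n) + (4:ℝ)⁻¹ ^ (n+1) :=
  (Finset.mem_filter.mp ha).2

noncomputable def gxAux (K : Set X) (M : ℝ) (p : ℕ × ℕ) : X :=
  if h : p.2 < ((gA K M p.1).toList).length then
    ((2:ℂ) ^ (p.1 + 1)) • ((gA K M p.1).toList).get ⟨_, h⟩
  else 0

/-- The null sequence, enumerating the scaled nets via `Nat.pair`. -/
noncomputable def gx (K : Set X) (M : ℝ) (j : ℕ) : X := gxAux K M (Nat.unpair j)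

lemma gx_pair (K : Set X) (M : ℝ) (n i : ℕ) : gx K M (Nat.pair n i) = gxAux K M (n, i) := by
  rw [gx, Nat.unpair_pair]

lemma g_main {K : Set X} {M : ℝ} (hK : IsCompact K) (hM : ∀ k ∈ K, ‖k‖ ≤ M) (N : ℕ)
    {k : X} (hk : k ∈ K) :
    ∃ g : ℕ → X, (∀ n < N, g n ∈ gA K M n) ∧
      k - ∑ n ∈ Finset.range N, g n ∈ gR K N := by
  induction N with
  | zero => exact ⟨fun _ => 0, fun n hn => absurd hn (Nat.not_lt_zero n), by simpa [gR] using hk⟩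
  | succ N ih =>
    obtain ⟨g, hg, hmem⟩ := ih
    obtain ⟨a, ha, ha2⟩ := gA_step hK hM N hmem
    refine ⟨Function.update g N a, ?_, ?_⟩
    · intro n hn
      rcases Nat.lt_succ_iff_lt_or_eq.mp hn with h | rfl
      · rw [Function.update_of_ne (Nat.ne_of_lt h)]
        exact hg n h
      · rw [Function.update_self]
        exact ha
    · have hsum : ∑ n ∈ Finset.range (N+1), Function.update g N a n
          = (∑ n ∈ Finset.range N, g n) + a := by
        rw [Finset.sum_range_succ, Function.update_self]
        congr 1
        exact Finset.sum_congr rfl fun n hn =>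
          Function.update_of_ne (Nat.ne_of_lt (Finset.mem_range.mp hn)) _ _
      rw [hsum, ← sub_sub]
      exact ha2

lemma gx_tendsto (K : Set X) (M : ℝ) : Tendsto (gx K M) atTop (nhds 0) := by
  rw [NormedAddCommGroup.tendsto_nhds_zero]
  intro ε hε
  obtain ⟨n₀, hn₀⟩ := exists_pow_lt_of_lt_one (show (0:ℝ) < ε/4 by linarith)
    (show (2:ℝ)⁻¹ < 1 by norm_num)
  set N₁ := max n₀ 1 with hN₁
  set Lmax := (Finset.range N₁).sup (fun n => (gA K M n).card) with hLmax
  set T : Finset ℕ :=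
    (Finset.range N₁ ×ˢ Finset.range Lmax).image (fun p => Nat.pair p.1 p.2) with hT
  rw [eventually_atTop]
  refine ⟨T.sup id + 1, fun j hj => ?_⟩
  have hjT : j ∉ T := fun hmem => by
    have := Finset.le_sup (f := id) hmem
    simp only [id] at this
    omega
  by_cases h : (Nat.unpair j).2 < ((gA K M (Nat.unpair j).1).toList).length
  · set n := (Nat.unpair j).1 with hn_def
    have hn : N₁ ≤ n := by
      by_contra hlt
      push_neg at hlt
      apply hjT
      refine Finset.mem_image.mpr ⟨((Nat.unpair j).1, (Nat.unpair j).2), ?_, Nat.pair_unpair j⟩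
      refine Finset.mem_product.mpr ⟨Finset.mem_range.mpr hlt, Finset.mem_range.mpr ?_⟩
      calc (Nat.unpair j).2 < (gA K M n).card := by
            simpa [Finset.length_toList] using h
        _ ≤ Lmax := Finset.le_sup (f := fun n => (gA K M n).card) (Finset.mem_range.mpr hlt)
    have hn1 : n ≠ 0 := by omega
    have hle : ‖gx K M j‖ ≤ (2:ℝ)^(n+1) * ((4:ℝ)⁻¹^n + (4:ℝ)⁻¹^(n+1)) := by
      rw [gx, gxAux, dif_pos h, norm_smul]
      have ha : ((gA K M n).toList).get ⟨_, h⟩ ∈ gA K M n :=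
        Finset.mem_toList.mp (List.get_mem _ _)
      have hb := gA_norm_le ha
      rw [if_neg hn1] at hb
      have h2 : ‖(2:ℂ)^(n+1)‖ = (2:ℝ)^(n+1) := by
        rw [norm_pow]
        norm_num
      rw [h2]
      exact mul_le_mul_of_nonneg_left hb (by positivity)
    set t := ((2:ℝ)⁻¹)^n with htdef
    have ht1 : (2:ℝ)^n * t = 1 := by rw [htdef, ← mul_pow]; norm_num
    have ht2 : t < ε/4 := lt_of_le_of_lt
      (pow_le_pow_of_le_one (by norm_num) (by norm_num) (le_trans (le_max_left _ _) hn)) hn₀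
    have h4 : ((4:ℝ))⁻¹^n = t * t := by rw [htdef, ← mul_pow]; norm_num
    have ht0 : 0 ≤ t := by positivity
    calc ‖gx K M j‖ ≤ (2:ℝ)^(n+1) * ((4:ℝ)⁻¹^n + (4:ℝ)⁻¹^(n+1)) := hle
      _ < ε := by
        rw [pow_succ, pow_succ, h4]
        have heq : (2:ℝ)^n * 2 * (t*t + t*t*(4:ℝ)⁻¹) = (5/2)*(((2:ℝ)^n * t)*t) := by ring
        rw [heq, ht1, one_mul]
        linarith
  · rw [gx, gxAux, dif_neg h]
    simpa using hε

end Forward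

open Filter

/-- In a complex Banach space, a set `K` is compact iff it is closed and contained in the
closure of the set of finite absolutely convex combinations of the terms of some null
sequence. -/
theorem isCompact_iff_subset_closure_absConvexComb_of_null_seq
    (X : Type*) [NormedAddCommGroup X] [NormedSpace ℂ X] [CompleteSpace X] (K : Set X) :
    IsCompact K ↔
      IsClosed K ∧ ∃ x : ℕ → X, Tendsto x atTop (nhds 0) ∧
        K ⊆ closure {v : X | ∃ (F : Finset ℕ) (τ : ℕ → ℂ),
          (∑ i ∈ F, ‖τ i‖) ≤ 1 ∧ v = ∑ i ∈ F, τ i • x i} := by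
  constructor
  · intro hK
    refine ⟨hK.isClosed, ?_⟩
    obtain ⟨M, hM⟩ : ∃ M : ℝ, ∀ k ∈ K, ‖k‖ ≤ M := by
      obtain ⟨r, hr⟩ := hK.isBounded.subset_closedBall 0
      exact ⟨r, fun k hk => by simpa [mem_closedBall_zero_iff] using hr hk⟩
    refine ⟨gx K M, gx_tendsto K M, fun k hk => ?_⟩
    rw [Metric.mem_closure_iff]
    intro ε hε
    obtain ⟨N, hN⟩ := exists_pow_lt_of_lt_one hε (show (4:ℝ)⁻¹ < 1 by norm_num)
    obtain ⟨g, hg, hmem⟩ := g_main hK hM (N+1) hk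
    refine ⟨∑ n ∈ Finset.range (N+1), g n, ?_, ?_⟩
    · have hidx : ∀ n, ∃ i, n < N+1 → gx K M (Nat.pair n i) = ((2:ℂ)^(n+1)) • g n := by
        intro n
        by_cases hn : n < N+1
        · have hmem' : g n ∈ (gA K M n).toList := Finset.mem_toList.mpr (hg n hn)
          obtain ⟨⟨i, hi⟩, hget⟩ := List.mem_iff_get.mp hmem'
          refine ⟨i, fun _ => ?_⟩
          rw [gx_pair, gxAux, dif_pos hi]
          show ((2:ℂ) ^ (n + 1)) • ((gA K M n).toList).get ⟨i, hi⟩ = _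
          rw [hget]
        · exact ⟨0, fun hc => absurd hc hn⟩
      choose ι hι using hidx
      have hinj : ∀ a ∈ Finset.range (N+1), ∀ b ∈ Finset.range (N+1),
          Nat.pair a (ι a) = Nat.pair b (ι b) → a = b := by
        intro a _ b _ hab
        have := congrArg (fun j => (Nat.unpair j).1) hab
        simpa [Nat.unpair_pair] using this
      refine ⟨(Finset.range (N+1)).image (fun n => Nat.pair n (ι n)),
        fun j => (((2:ℂ))^((Nat.unpair j).1 + 1))⁻¹, ?_, ?_⟩
      · rw [Finset.sum_image hinj]
        have habs : ∀ n ∈ Finset.range (N+1),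
            ‖(((2:ℂ))^((Nat.unpair (Nat.pair n (ι n))).1 + 1))⁻¹‖
              = ((2:ℝ)^(n+1))⁻¹ := by
          intro n _
          simp [Nat.unpair_pair, norm_inv, norm_pow]
        rw [Finset.sum_congr rfl habs]
        have h1 : ∀ n : ℕ, ((2:ℝ)^(n+1))⁻¹ = (1/2:ℝ)^n * (1/2) := by
          intro n
          rw [one_div, ← pow_succ, inv_pow]
        simp_rw [h1]
        rw [← Finset.sum_mul]
        have h2 := sum_geometric_two_le (N+1)
        have h3 : (0:ℝ) ≤ ∑ n ∈ Finset.range (N+1), (1/2:ℝ)^n :=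
          Finset.sum_nonneg fun n _ => by positivity
        linarith
      · rw [Finset.sum_image hinj]
        refine Finset.sum_congr rfl fun n hn => ?_
        simp only [Nat.unpair_pair]
        rw [hι n (Finset.mem_range.mp hn), smul_smul,
          inv_mul_cancel₀ (pow_ne_zero _ (two_ne_zero)), one_smul]
    · rw [dist_eq_norm]
      have hball := gR_subset_ball K N hmem
      rw [Metric.mem_closedBall, dist_zero_right] at hball
      calc ‖k - ∑ n ∈ Finset.range (N+1), g n‖ ≤ (4:ℝ)⁻¹^(N+1) := hball
        _ ≤ (4:ℝ)⁻¹^N := pow_le_pow_of_le_one (by norm_num) (by norm_num) (Nat.le_succ N)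
        _ < ε := hN
  · rintro ⟨hKc, x, hx, hsub⟩
    exact (TotallyBounded.isCompact_of_isClosed
      (absconv_totallyBounded X x hx).closure isClosed_closure).of_isClosed_subset hKc hsub
end

section
/- Let X be a normed space over ℂ and K ⊆ X. Then K is totally bounded if and only if K is bounded and for every ε > 0 there exists a finite-dimensional subspace V_ε ⊆ X such that every point of K lies within distance ε of some point of V_ε. -/
/-- In a complex normed space, a set `K` is totally bounded iff it is bounded and for
every `ε > 0` there is a finite-dimensional subspace `V_ε` such that every point of `K`
lies within distance `ε` of some point of `V_ε`. -/
theorem totallyBounded_iff_bounded_and_finiteDimensional_approx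
    (X : Type*) [NormedAddCommGroup X] [NormedSpace ℂ X] (K : Set X) :
    TotallyBounded K ↔
      Bornology.IsBounded K ∧ ∀ ε : ℝ, 0 < ε →
        ∃ V : Submodule ℂ X, FiniteDimensional ℂ V ∧
          ∀ x ∈ K, ∃ v ∈ V, ‖x - v‖ ≤ ε := by
  constructor
  · intro h
    refine ⟨h.isBounded, fun ε hε => ?_⟩
    obtain ⟨t, ht, hcov⟩ := (Metric.totallyBounded_iff.mp h) ε hε
    refine ⟨Submodule.span ℂ (t : Set X), ?_, ?_⟩
    · exact FiniteDimensional.span_of_finite ℂ ht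
    · intro x hx
      obtain ⟨y, hy, hxy⟩ := Set.mem_iUnion₂.mp (hcov hx)
      exact ⟨y, Submodule.subset_span hy, by
        rw [← dist_eq_norm]; exact le_of_lt hxy⟩
  · rintro ⟨hb, h⟩
    rw [Metric.totallyBounded_iff]
    intro ε hε
    obtain ⟨V, hV, happ⟩ := h (ε/3) (by linarith)
    obtain ⟨R, hR⟩ := hb.subset_closedBall 0
    haveI := hV
    have hcompact : IsCompact ((Subtype.val : V → X) ''
        (Metric.closedBall 0 (R + ε/3))) :=
      (isCompact_closedBall (0 : V) _).image continuous_subtype_val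
    obtain ⟨t, ht, hcov⟩ := Metric.totallyBounded_iff.mp
      hcompact.totallyBounded (ε/3) (by linarith)
    refine ⟨t, ht, fun x hx => ?_⟩
    obtain ⟨v, hvV, hxv⟩ := happ x hx
    have hxR : ‖x‖ ≤ R := by
      simpa using Metric.mem_closedBall.mp (hR hx)
    have hvnorm : ‖v‖ ≤ R + ε/3 := by
      calc ‖v‖ = ‖x - (x - v)‖ := by rw [sub_sub_cancel]
        _ ≤ ‖x‖ + ‖x - v‖ := norm_sub_le _ _
        _ ≤ R + ε/3 := add_le_add hxR hxv
    have hvmem : v ∈ (Subtype.val : V → X) '' (Metric.closedBall 0 (R + ε/3)) := by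
      refine ⟨⟨v, hvV⟩, ?_, rfl⟩
      simpa [Metric.mem_closedBall] using hvnorm
    obtain ⟨y, hy, hvy⟩ := Set.mem_iUnion₂.mp (hcov hvmem)
    refine Set.mem_iUnion₂.mpr ⟨y, hy, ?_⟩
    have h1 : dist x v ≤ ε/3 := by rw [dist_eq_norm]; exact hxv
    have h2 : dist v y < ε/3 := Metric.mem_ball.mp hvy
    have h3 := dist_triangle x v y
    rw [Metric.mem_ball]
    linarith
end

section
/- For every finite-dimensional normed space V over ℂ and every ε > 0, there exist n ∈ ℕ and a subspace W of ℓ¹_n such that the quotient space ℓ¹_n / W is (1 + ε)-isomorphic to V; that is, there exists a continuous linear equivalence φ : ℓ¹_n / W → V with ‖φ‖ · ‖φ⁻¹‖ < 1 + ε. -/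
open Metric Submodule

set_option maxHeartbeats 1000000 in
/-- Every finite-dimensional complex normed space is `(1 + ε)`-isomorphic to a quotient
of some `ℓ¹_n`. -/
theorem exists_quotient_of_l1_close
    (V : Type*) [NormedAddCommGroup V] [NormedSpace ℂ V] [FiniteDimensional ℂ V]
    (ε : ℝ) (hε : 0 < ε) :
    ∃ (n : ℕ) (W : Submodule ℂ (PiLp 1 (fun _ : Fin n => ℂ)))
      (φ : (PiLp 1 (fun _ : Fin n => ℂ) ⧸ W) ≃L[ℂ] V),
        ‖(φ : (PiLp 1 (fun _ : Fin n => ℂ) ⧸ W) →L[ℂ] V)‖ *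
          ‖(φ.symm : V →L[ℂ] (PiLp 1 (fun _ : Fin n => ℂ) ⧸ W))‖ < 1 + ε := by
  classical
  by_cases hV : Subsingleton V
  · -- trivial case
    haveI : Subsingleton (PiLp 1 (fun _ : Fin 0 => ℂ)) := inferInstance
    haveI hcl : IsClosed ((⊥ : Submodule ℂ (PiLp 1 (fun _ : Fin 0 => ℂ))) : Set (PiLp 1 (fun _ : Fin 0 => ℂ))) :=
      Submodule.closed_of_finiteDimensional ⊥
    haveI : Subsingleton ((PiLp 1 (fun _ : Fin 0 => ℂ)) ⧸ (⊥ : Submodule ℂ (PiLp 1 (fun _ : Fin 0 => ℂ)))) :=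
      Quotient.instSubsingletonQuotient _
    set φ := ((LinearEquiv.ofSubsingleton _ _).toContinuousLinearEquiv :
      (PiLp 1 (fun _ : Fin 0 => ℂ) ⧸ (⊥ : Submodule ℂ (PiLp 1 (fun _ : Fin 0 => ℂ)))) ≃L[ℂ] V)
    refine ⟨0, ⊥, φ, ?_⟩
    rw [ContinuousLinearMap.opNorm_subsingleton, zero_mul]
    linarith
  · haveI : Nontrivial V := not_subsingleton_iff_nontrivial.mp hV
    set δ : ℝ := ε / (2 * (1 + ε)) with hδdef
    have hδ0 : 0 < δ := by positivity
    have hδ1 : δ < 1 := by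
      rw [hδdef, div_lt_one (by positivity)]; nlinarith
    obtain ⟨t, hts, htfin, htcov⟩ := (isCompact_sphere (0 : V) 1).finite_cover_balls hδ0
    set F := htfin.toFinset with hF
    set n := F.card with hn
    set x : Fin n → V := fun i => ((F.equivFin.symm i : F) : V) with hx
    have hx_mem : ∀ i, x i ∈ sphere (0 : V) 1 := by
      intro i
      apply hts
      have := (F.equivFin.symm i).2
      exact htfin.mem_toFinset.mp this
    have hx_norm : ∀ i, ‖x i‖ = 1 := fun i => mem_sphere_zero_iff_norm.mp (hx_mem i)
    have hnet : ∀ u ∈ sphere (0 : V) 1, ∃ i, ‖u - x i‖ < δ := by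
      intro u hu
      obtain ⟨y, hyt, hyball⟩ := Set.mem_iUnion₂.mp (htcov hu)
      have hyF : y ∈ F := htfin.mem_toFinset.mpr hyt
      refine ⟨F.equivFin ⟨y, hyF⟩, ?_⟩
      have hxy : x (F.equivFin ⟨y, hyF⟩) = y := by
        rw [hx]; simp
      rw [hxy, ← dist_eq_norm]
      exact mem_ball.mp hyball
    -- the linear map T : ℓ¹ₙ → V
    set E := PiLp 1 (fun _ : Fin n => ℂ) with hE
    set T : E →ₗ[ℂ] V :=
      (Fintype.linearCombination ℂ x).comp
        (WithLp.linearEquiv 1 ℂ (Fin n → ℂ)).toLinearMap with hTdef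
    have hT : ∀ a : E, T a = ∑ i, a i • x i := fun a => by
      rw [hTdef]; simp [Fintype.linearCombination_apply]; rfl
    have hnorm : ∀ a : E, ‖a‖ = ∑ i, ‖a i‖ := by
      intro a
      rw [PiLp.norm_eq_sum (p := 1) (by norm_num)]
      simp
    -- T is surjective
    have hspan : Submodule.span ℂ (Set.range x) = ⊤ := by
      by_contra hne
      have hclosed : IsClosed ((Submodule.span ℂ (Set.range x) : Submodule ℂ V) : Set V) :=
        Submodule.closed_of_finiteDimensional _
      have hex : ∃ v : V, v ∉ Submodule.span ℂ (Set.range x) := by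
        by_contra h
        push_neg at h
        exact hne (Submodule.eq_top_iff'.mpr h)
      obtain ⟨x₀, hx₀, hx₀far⟩ := riesz_lemma hclosed hex hδ1
      have hx₀0 : x₀ ≠ 0 := fun h => hx₀ (h ▸ Submodule.zero_mem _)
      have hx₀n : (0:ℝ) < ‖x₀‖ := norm_pos_iff.mpr hx₀0
      set u : V := ((‖x₀‖ : ℂ))⁻¹ • x₀ with hu
      have hun : ‖u‖ = 1 := by
        rw [hu, norm_smul]
        simp [hx₀n.ne']
      obtain ⟨i, hi⟩ := hnet u (mem_sphere_zero_iff_norm.mpr hun)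
      have hmem : ((‖x₀‖ : ℂ)) • x i ∈ Submodule.span ℂ (Set.range x) :=
        Submodule.smul_mem _ _ (Submodule.subset_span ⟨i, rfl⟩)
      have hfar := hx₀far _ hmem
      have hrw : ‖u - x i‖ = ‖x₀‖⁻¹ * ‖x₀ - ((‖x₀‖ : ℂ)) • x i‖ := by
        rw [hu, show ((‖x₀‖:ℂ))⁻¹ • x₀ - x i
            = ((‖x₀‖:ℂ))⁻¹ • (x₀ - ((‖x₀‖:ℂ)) • x i) by
          rw [smul_sub, smul_smul]
          congr 1
          rw [inv_mul_cancel₀ (by exact_mod_cast hx₀n.ne'), one_smul]]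
        rw [norm_smul]
        simp
      rw [hrw] at hi
      nlinarith [hfar, hi, hx₀n, inv_mul_cancel₀ hx₀n.ne', inv_pos.mpr hx₀n]
    have hTsurj : Function.Surjective T := by
      have h1 : Function.Surjective (Fintype.linearCombination ℂ x) := by
        rw [← LinearMap.range_eq_top, Fintype.range_linearCombination]
        exact hspan
      rw [hTdef]
      simp only [LinearMap.coe_comp, LinearEquiv.coe_coe]
      exact h1.comp (EquivLike.surjective _)
    -- the quotient equivalence
    haveI hker_closed : IsClosed ((LinearMap.ker T : Submodule ℂ E) : Set E) :=
      Submodule.closed_of_finiteDimensional _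
    set ψ : (E ⧸ LinearMap.ker T) ≃ₗ[ℂ] V := T.quotKerEquivOfSurjective hTsurj with hψ
    set φ : (E ⧸ LinearMap.ker T) ≃L[ℂ] V := ψ.toContinuousLinearEquiv with hφ
    have hφmk : ∀ a : E, φ (Submodule.Quotient.mk a) = T a := fun a => rfl
    clear_value φ ψ
    refine ⟨n, LinearMap.ker T, φ, ?_⟩
    -- norm bound on φ
    have hφnorm : ‖(φ : (E ⧸ LinearMap.ker T) →L[ℂ] V)‖ ≤ 1 := by
      refine ContinuousLinearMap.opNorm_le_bound _ zero_le_one (fun q => ?_)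
      refine le_of_forall_pos_le_add (fun η hη => ?_)
      obtain ⟨a, rfl, ha⟩ := Submodule.Quotient.norm_mk_lt q hη
      have h1 : ‖T a‖ ≤ ‖a‖ := by
        rw [hT a, hnorm a]
        refine (norm_sum_le _ _).trans ?_
        refine Finset.sum_le_sum (fun i _ => ?_)
        rw [norm_smul, hx_norm i, mul_one]
      calc ‖(φ : (E ⧸ LinearMap.ker T) →L[ℂ] V) (Submodule.Quotient.mk a)‖
          = ‖T a‖ := by rw [ContinuousLinearEquiv.coe_coe, hφmk]
        _ ≤ ‖a‖ := h1
        _ ≤ ‖(Submodule.Quotient.mk a : E ⧸ LinearMap.ker T)‖ + η := ha.le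
        _ = 1 * ‖(Submodule.Quotient.mk a : E ⧸ LinearMap.ker T)‖ + η := by ring
    -- norm bound on φ.symm
    set M : ℝ := ‖(φ.symm : V →L[ℂ] (E ⧸ LinearMap.ker T))‖ with hM
    have hM0 : 0 ≤ M := by rw [hM]; exact ContinuousLinearMap.opNorm_nonneg _
    have hMle : M ≤ 1 + δ * M := by
      rw [hM]
      refine ContinuousLinearMap.opNorm_le_bound _ (by positivity) (fun v => ?_)
      rcases eq_or_ne v 0 with rfl | hv0
      · simp
      · have hvn : (0:ℝ) < ‖v‖ := norm_pos_iff.mpr hv0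
        set u : V := ((‖v‖ : ℂ))⁻¹ • v with hu
        have hun : ‖u‖ = 1 := by
          rw [hu, norm_smul]; simp [hvn.ne']
        obtain ⟨i, hi⟩ := hnet u (mem_sphere_zero_iff_norm.mpr hun)
        set ei : E := WithLp.toLp 1 (Pi.single i (1:ℂ)) with hei
        have heinorm : ‖ei‖ = 1 := by
          rw [hnorm, hei]
          rw [Finset.sum_eq_single i]
          · simp
          · intro j _ hj; simp [Pi.single_apply, hj]
          · simp
        have hTei : T ei = x i := by
          rw [hT]
          rw [Finset.sum_eq_single i]
          · simp [hei]
          · intro j _ hj; simp [hei, Pi.single_apply, hj]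
          · simp
        have hsymmxi : φ.symm (x i) = Submodule.Quotient.mk ei := by
          rw [ContinuousLinearEquiv.symm_apply_eq, hφmk, hTei]
        have key : ‖(φ.symm : V →L[ℂ] (E ⧸ LinearMap.ker T)) u‖ ≤ 1 + δ * M := by
          have hdecomp : (φ.symm : V →L[ℂ] (E ⧸ LinearMap.ker T)) u
              = Submodule.Quotient.mk ei + (φ.symm : V →L[ℂ] _) (u - x i) := by
            rw [← hsymmxi]
            simp only [ContinuousLinearEquiv.coe_coe]
            rw [← map_add]
            congr 1
            abel
          rw [hdecomp]
          refine (norm_add_le _ _).trans ?_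
          have h2 : ‖(φ.symm : V →L[ℂ] (E ⧸ LinearMap.ker T)) (u - x i)‖ ≤ M * δ := by
            refine ((φ.symm : V →L[ℂ] (E ⧸ LinearMap.ker T)).le_opNorm _).trans ?_
            exact mul_le_mul_of_nonneg_left hi.le hM0
          have h3 : ‖(Submodule.Quotient.mk ei : E ⧸ LinearMap.ker T)‖ ≤ 1 :=
            heinorm ▸ Submodule.Quotient.norm_mk_le _ ei
          linarith [h2, h3]
        have hvu : v = ((‖v‖ : ℂ)) • u := by
          rw [hu, smul_smul, mul_inv_cancel₀ (by exact_mod_cast hvn.ne'), one_smul]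
        calc ‖(φ.symm : V →L[ℂ] (E ⧸ LinearMap.ker T)) v‖
            = ‖v‖ * ‖(φ.symm : V →L[ℂ] (E ⧸ LinearMap.ker T)) u‖ := by
              conv_lhs => rw [hvu]
              rw [map_smul]
              rw [norm_smul ((‖v‖ : ℂ)) ((φ.symm : V →L[ℂ] (E ⧸ LinearMap.ker T)) u)]
              simp
          _ ≤ ‖v‖ * (1 + δ * M) := mul_le_mul_of_nonneg_left key hvn.le
          _ = (1 + δ * M) * ‖v‖ := by ring
    have hδeq : δ * (1 + ε) = ε / 2 := by
      rw [hδdef]; field_simp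
    have hMlt : M < 1 + ε := by nlinarith [hMle, hM0, hδ0, hδ1, hε, hδeq]
    calc ‖(φ : (E ⧸ LinearMap.ker T) →L[ℂ] V)‖ *
          ‖(φ.symm : V →L[ℂ] (E ⧸ LinearMap.ker T))‖
        ≤ 1 * M := mul_le_mul_of_nonneg_right hφnorm hM0
      _ = M := one_mul M
      _ < 1 + ε := hMlt
end
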